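/- For integers n ≥ 4 and m ≥ 3, the lexicographic product of paths satisfies mc(P_n ∘ P_m) = m²n − m² − n + 2. -/

import Mathlib

open SimpleGraph

/-- An edge-coloring `c` of `G` is a *monochromatic connection coloring* (MC-coloring)
if any two vertices of `G` are joined by a monochromatic walk, i.e. a walk all of whose
edges receive the same color. -/
def SimpleGraph.IsMCColoring {V : Type*} (G : SimpleGraph V) (c : Sym2 V → ℕ) : Prop :=
  ∀ u v : V, ∃ w : G.Walk u v, ∃ k : ℕ, ∀ e ∈ w.edges, c e = k

/-- The *monochromatic connection number* `mc G`: the maximum number of colors used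
on the edges of `G` by an MC-coloring of `G`. -/
noncomputable def SimpleGraph.mc {V : Type*} (G : SimpleGraph V) : ℕ :=
  sSup {n | ∃ c : Sym2 V → ℕ, G.IsMCColoring c ∧ (c '' G.edgeSet).ncard = n}

/-- The lexicographic product `G ∘ H`: `(g,h)` and `(g',h')` are adjacent iff
`gg' ∈ E(G)`, or `g = g'` and `hh' ∈ E(H)`. -/
def SimpleGraph.lexProd {α β : Type*} (G : SimpleGraph α) (H : SimpleGraph β) :
    SimpleGraph (α × β) where
  Adj x y := G.Adj x.1 y.1 ∨ (x.1 = y.1 ∧ H.Adj x.2 y.2)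
  symm := by
    constructor
    rintro x y (h | ⟨h1, h2⟩)
    · exact Or.inl h.symm
    · exact Or.inr ⟨h1.symm, h2.symm⟩
  loopless := by
    constructor
    rintro x (h | ⟨-, h⟩)
    · exact G.loopless.irrefl _ h
    · exact H.loopless.irrefl _ h

/-- The strong product `G ⊠ H`: `(g,h)` and `(g',h')` are adjacent iff
`gg' ∈ E(G)` and `h = h'`, or `g = g'` and `hh' ∈ E(H)`, or `gg' ∈ E(G)` and `hh' ∈ E(H)`. -/
def SimpleGraph.strongProd {α β : Type*} (G : SimpleGraph α) (H : SimpleGraph β) :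
    SimpleGraph (α × β) where
  Adj x y := (G.Adj x.1 y.1 ∧ x.2 = y.2) ∨ (x.1 = y.1 ∧ H.Adj x.2 y.2) ∨
      (G.Adj x.1 y.1 ∧ H.Adj x.2 y.2)
  symm := by
    constructor
    rintro x y (⟨h1, h2⟩ | ⟨h1, h2⟩ | ⟨h1, h2⟩)
    · exact Or.inl ⟨h1.symm, h2.symm⟩
    · exact Or.inr (Or.inl ⟨h1.symm, h2.symm⟩)
    · exact Or.inr (Or.inr ⟨h1.symm, h2.symm⟩)
  loopless := by
    constructor
    rintro x (⟨h, -⟩ | ⟨-, h⟩ | ⟨h, -⟩)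
    · exact G.loopless.irrefl _ h
    · exact H.loopless.irrefl _ h
    · exact G.loopless.irrefl _ h

/-- The direct (tensor) product `G × H`: `(g,h)` and `(g',h')` are adjacent iff
`gg' ∈ E(G)` and `hh' ∈ E(H)`. -/
def SimpleGraph.tensorProd {α β : Type*} (G : SimpleGraph α) (H : SimpleGraph β) :
    SimpleGraph (α × β) where
  Adj x y := G.Adj x.1 y.1 ∧ H.Adj x.2 y.2
  symm := by
    constructor
    rintro x y ⟨h1, h2⟩
    exact ⟨h1.symm, h2.symm⟩
  loopless := by
    constructor
    rintro x ⟨h, -⟩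
    exact G.loopless.irrefl _ h

/-- The Cartesian (box) product of a finite family of graphs: two tuples are adjacent
iff they agree in all coordinates but one, where they are adjacent. -/
def SimpleGraph.piBoxProd {n : ℕ} {V : Fin n → Type*} (G : ∀ i, SimpleGraph (V i)) :
    SimpleGraph (∀ i, V i) where
  Adj x y := ∃ i, (G i).Adj (x i) (y i) ∧ ∀ j, j ≠ i → x j = y j
  symm := by
    constructor
    rintro x y ⟨i, hadj, heq⟩
    exact ⟨i, hadj.symm, fun j hj => (heq j hj).symm⟩
  loopless := by
    constructor
    rintro x ⟨i, hadj, -⟩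
    exact (G i).loopless.irrefl _ hadj

/-- The (iterated, left-associated) lexicographic product of a finite family of graphs:
two tuples are adjacent iff at the least coordinate where they differ,
they are adjacent. -/
def SimpleGraph.piLexProd {n : ℕ} {V : Fin n → Type*} (G : ∀ i, SimpleGraph (V i)) :
    SimpleGraph (∀ i, V i) where
  Adj x y := ∃ i, (G i).Adj (x i) (y i) ∧ ∀ j, j < i → x j = y j
  symm := by
    constructor
    rintro x y ⟨i, hadj, heq⟩
    exact ⟨i, hadj.symm, fun j hj => (heq j hj).symm⟩
  loopless := by
    constructor
    rintro x ⟨i, hadj, -⟩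
    exact (G i).loopless.irrefl _ hadj

lemma exists_adj_dist_lt {V : Type*} (H : SimpleGraph V) {x w : V}
    (h : H.Reachable x w) (hne : w ≠ x) :
    ∃ u, H.Adj u w ∧ H.dist x u < H.dist x w := by
  obtain ⟨p, hp⟩ := h.symm.exists_walk_length_eq_dist
  cases p with
  | nil => exact absurd rfl hne
  | cons ha q =>
    rename_i v
    refine ⟨v, ha.symm, ?_⟩
    have h1 : H.dist x v ≤ q.length := by
      simpa [SimpleGraph.dist_comm] using SimpleGraph.dist_le q
    have h2 : H.dist x w = q.length + 1 := by
      rw [SimpleGraph.dist_comm, ← hp, SimpleGraph.Walk.length_cons]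
    omega

lemma reach_card {V : Type*} [Finite V] (H : SimpleGraph V) (x : V) (W : Set V)
    (hx : x ∈ W) (hW : ∀ w ∈ W, H.Reachable x w) :
    W.ncard ≤ {e | e ∈ H.edgeSet ∧ ∀ v ∈ e, H.Reachable x v}.ncard + 1 := by
  classical
  have hfin : {e : Sym2 V | e ∈ H.edgeSet ∧ ∀ v ∈ e, H.Reachable x v}.Finite :=
    Set.toFinite _
  have hsel : ∀ w ∈ W \ {x}, ∃ u, H.Adj u w ∧ H.dist x u < H.dist x w := by
    rintro w ⟨hw, hwx⟩
    exact exists_adj_dist_lt H (hW w hw) (by simpa using hwx)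
  choose! g hg1 hg2 using hsel
  have hmaps : ∀ w ∈ W \ {x}, s(g w, w) ∈ {e : Sym2 V | e ∈ H.edgeSet ∧ ∀ v ∈ e, H.Reachable x v} := by
    intro w hw
    refine ⟨(hg1 w hw), ?_⟩
    intro v hv
    rw [Sym2.mem_iff] at hv
    rcases hv with rfl | rfl
    · exact (hW w hw.1).trans ((hg1 w hw).symm.reachable)
    · exact hW _ hw.1
  have hinj : Set.InjOn (fun w => s(g w, w)) (W \ {x}) := by
    intro a ha b hb hab
    simp only [Sym2.eq, Sym2.rel_iff', Prod.mk.injEq, Prod.swap_prod_mk] at hab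
    rcases hab with ⟨-, h⟩ | ⟨h1, h2⟩
    · exact h
    · exfalso
      have ha2 := hg2 a ha
      have hb2 := hg2 b hb
      rw [h1] at ha2
      rw [← h2] at hb2
      omega
  have key : (W \ {x}).ncard ≤ {e : Sym2 V | e ∈ H.edgeSet ∧ ∀ v ∈ e, H.Reachable x v}.ncard :=
    Set.ncard_le_ncard_of_injOn _ hmaps hinj hfin
  have : (W \ {x}).ncard + 1 = W.ncard := Set.ncard_diff_singleton_add_one hx (Set.toFinite _)
  omega

lemma mc_upper_aux {V : Type*} [Fintype V] (G : SimpleGraph V)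
    (x y : V) (hxy : x ≠ y) (hnadj : ¬ G.Adj x y)
    (hno : ∀ u, ¬ (G.Adj u x ∧ G.Adj u y))
    (c : Sym2 V → ℕ) (hc : G.IsMCColoring c) :
    (c '' G.edgeSet).ncard + Fintype.card V ≤ G.edgeSet.ncard + 2 := by
  classical
  set H : ℕ → SimpleGraph V := fun k => SimpleGraph.fromEdgeSet {e | e ∈ G.edgeSet ∧ c e = k}
    with hHdef
  have hHE : ∀ k, (H k).edgeSet = {e | e ∈ G.edgeSet ∧ c e = k} := by
    intro k
    rw [hHdef, SimpleGraph.edgeSet_fromEdgeSet]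
    ext e
    simp only [Set.mem_diff, Set.mem_setOf_eq]
    exact ⟨fun h => h.1, fun h => ⟨h, G.not_isDiag_of_mem_edgeSet h.1⟩⟩
  have hHG : ∀ k u v, (H k).Adj u v → G.Adj u v ∧ c s(u, v) = k := by
    intro k u v h
    have := (H k).mem_edgeSet.mpr h
    rw [hHE] at this
    exact ⟨G.mem_edgeSet.mp this.1, this.2⟩
  have htrans : ∀ (u v : V) (k : ℕ) (w : G.Walk u v),
      (∀ e ∈ w.edges, c e = k) → (H k).Reachable u v := by
    intro u v k w hw
    exact ⟨w.transfer (H k) (by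
      intro e he
      rw [hHE]
      exact ⟨w.edges_subset_edgeSet he, hw e he⟩)⟩
  obtain ⟨w0, k0, hw0⟩ := hc x y
  have hxy0 : (H k0).Reachable x y := htrans _ _ _ w0 hw0
  have hsel : ∀ u : V, ∃ k : ℕ, ((u = x ∨ u = y) → k = k0) ∧
      ((u ≠ x ∧ ¬ G.Adj u x ∧ (H k).Reachable u x) ∨
       (u ≠ y ∧ ¬ G.Adj u y ∧ (H k).Reachable u y)) := by
    intro u
    by_cases hux : u = x
    · subst hux
      exact ⟨k0, fun _ => rfl, Or.inr ⟨hxy, hnadj, hxy0⟩⟩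
    by_cases huy : u = y
    · subst huy
      exact ⟨k0, fun _ => rfl, Or.inl ⟨Ne.symm hxy, fun ha => hnadj ha.symm, hxy0.symm⟩⟩
    by_cases hadj : G.Adj u x
    · have h2 : ¬ G.Adj u y := fun h => hno u ⟨hadj, h⟩
      obtain ⟨w, k, hk⟩ := hc u y
      exact ⟨k, fun h => absurd h (by simp [hux, huy]), Or.inr ⟨huy, h2, htrans _ _ _ w hk⟩⟩
    · obtain ⟨w, k, hk⟩ := hc u x
      exact ⟨k, fun h => absurd h (by simp [hux, huy]), Or.inl ⟨hux, hadj, htrans _ _ _ w hk⟩⟩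
  choose f hf1 hf2 using hsel
  have hfx : f x = k0 := hf1 x (Or.inl rfl)
  have hfy : f y = k0 := hf1 y (Or.inr rfl)
  set Dset : ℕ → Set (Sym2 V) := fun k => {e | e ∈ G.edgeSet ∧ c e = k} with hDdef
  set Sset : ℕ → Set V := fun k => {u | f u = k} with hSdef
  -- k0 bound
  have hk0bound : (Sset k0).ncard ≤ (Dset k0).ncard + 1 := by
    have hreach : ∀ u ∈ Sset k0, (H k0).Reachable x u := by
      intro u hu
      have hu' : f u = k0 := hu
      rcases hf2 u with ⟨-, -, hr⟩ | ⟨-, -, hr⟩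
      · rw [hu'] at hr; exact hr.symm
      · rw [hu'] at hr; exact hxy0.trans hr.symm
    have := reach_card (H k0) x (Sset k0) (show f x = k0 from hfx) hreach
    refine this.trans ?_
    have hsub : {e | e ∈ (H k0).edgeSet ∧ ∀ v ∈ e, (H k0).Reachable x v} ⊆ Dset k0 := by
      intro e he
      rw [hHE] at he
      exact he.1
    exact Nat.add_le_add_right (Set.ncard_le_ncard hsub (Set.toFinite _)) 1
  -- other colors
  have hother : ∀ k, k ≠ k0 → (Sset k).Nonempty → (Sset k).ncard + 1 ≤ (Dset k).ncard := by
    intro k hkne hkne2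
    set Sx : Set V := {u | f u = k ∧ u ≠ x ∧ ¬G.Adj u x ∧ (H k).Reachable u x} with hSxdef
    set Sy : Set V := {u | f u = k ∧ u ≠ y ∧ ¬G.Adj u y ∧ (H k).Reachable u y} with hSydef
    set Ex : Set (Sym2 V) := {e | e ∈ (H k).edgeSet ∧ ∀ v ∈ e, (H k).Reachable x v} with hExdef
    set Ey : Set (Sym2 V) := {e | e ∈ (H k).edgeSet ∧ ∀ v ∈ e, (H k).Reachable y v} with hEydef
    have hExD : Ex ⊆ Dset k := fun e he => by rw [hExdef] at he; have := he.1; rwa [hHE] at this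
    have hEyD : Ey ⊆ Dset k := fun e he => by rw [hEydef] at he; have := he.1; rwa [hHE] at this
    have hcover : Sset k ⊆ Sx ∪ Sy := by
      intro u hu
      have hu' : f u = k := hu
      rcases hf2 u with ⟨h1, h2, h3⟩ | ⟨h1, h2, h3⟩
      · rw [hu'] at h3; exact Or.inl ⟨hu', h1, h2, h3⟩
      · rw [hu'] at h3; exact Or.inr ⟨hu', h1, h2, h3⟩
    have hxS : x ∉ Sset k := by
      intro h
      exact hkne (by rw [← hfx]; exact (show f x = k from h).symm ▸ rfl)
    have hyS : y ∉ Sset k := by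
      intro h
      have : f y = k := h
      rw [hfy] at this
      exact hkne this.symm
    -- one-root bound
    have hroot : ∀ (z : V) (Sz : Set V), Sz ⊆ Sset k → Sz.Nonempty →
        (∀ u ∈ Sz, u ≠ z ∧ ¬ G.Adj u z ∧ (H k).Reachable u z) →
        Sz.ncard + 2 ≤
          {e | e ∈ (H k).edgeSet ∧ ∀ v ∈ e, (H k).Reachable z v}.ncard + 1 := by
      intro z Sz hsub hne hprop
      obtain ⟨u0, hu0⟩ := hne
      obtain ⟨wz, hwz, -⟩ :=
        exists_adj_dist_lt (H k) ((hprop u0 hu0).2.2) (Ne.symm (hprop u0 hu0).1)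
      have hzSz : z ∉ Sz := fun h => (hprop z h).1 rfl
      have hwzG : G.Adj wz z := (hHG k wz z hwz).1
      have hwzSz : wz ∉ Sz := fun h => (hprop wz h).2.1 hwzG
      have hwzz : wz ≠ z := hwz.ne
      have hreach : ∀ u ∈ insert wz (insert z Sz), (H k).Reachable z u := by
        intro u hu
        rcases hu with rfl | rfl | hu
        · exact hwz.symm.reachable
        · exact Reachable.refl _
        · exact ((hprop u hu).2.2).symm
      have hcard := reach_card (H k) z (insert wz (insert z Sz)) (by simp) hreach
      have h1 : (insert z Sz).ncard = Sz.ncard + 1 := Set.ncard_insert_of_notMem hzSz (Set.toFinite _)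
      have h2 : (insert wz (insert z Sz)).ncard = Sz.ncard + 2 := by
        rw [Set.ncard_insert_of_notMem (by simp [hwzz, hwzSz]) (Set.toFinite _), h1]
      omega
    by_cases hSy : Sy.Nonempty
    · by_cases hSx : Sx.Nonempty
      · by_cases hr : (H k).Reachable x y
        · -- everything reachable from x
          have hreach : ∀ u ∈ insert x (insert y (Sset k)), (H k).Reachable x u := by
            intro u hu
            rcases hu with rfl | rfl | hu
            · exact Reachable.refl _
            · exact hr
            · rcases hcover hu with ⟨-, -, -, h3⟩ | ⟨-, -, -, h3⟩
              · exact h3.symm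
              · exact hr.trans h3.symm
          have hcard := reach_card (H k) x (insert x (insert y (Sset k))) (by simp) hreach
          have h1 : (insert y (Sset k)).ncard = (Sset k).ncard + 1 :=
            Set.ncard_insert_of_notMem hyS (Set.toFinite _)
          have h2 : (insert x (insert y (Sset k))).ncard = (Sset k).ncard + 2 := by
            rw [Set.ncard_insert_of_notMem (by simp [hxy, hxS]) (Set.toFinite _), h1]
          have h3 : Ex.ncard ≤ (Dset k).ncard := Set.ncard_le_ncard hExD (Set.toFinite _)
          rw [h2] at hcard
          have hcard' : (Sset k).ncard + 2 ≤ Ex.ncard + 1 := hcard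
          omega
        · -- two components
          have hbx : Sx.ncard + 2 ≤ Ex.ncard + 1 :=
            hroot x Sx (fun u hu => hu.1) hSx (fun u hu => ⟨hu.2.1, hu.2.2.1, hu.2.2.2⟩)
          have hby : Sy.ncard + 2 ≤ Ey.ncard + 1 :=
            hroot y Sy (fun u hu => hu.1) hSy (fun u hu => ⟨hu.2.1, hu.2.2.1, hu.2.2.2⟩)
          have hdisj : Disjoint Ex Ey := by
            rw [Set.disjoint_left]
            intro e hex hey
            induction e with
            | _ a b =>
              exact hr ((hex.2 a (by simp)).trans ((hey.2 a (by simp)).symm))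
          have hunion : Ex.ncard + Ey.ncard ≤ (Dset k).ncard := by
            rw [← Set.ncard_union_eq hdisj (Set.toFinite _) (Set.toFinite _)]
            exact Set.ncard_le_ncard (Set.union_subset hExD hEyD) (Set.toFinite _)
          have hcov : (Sset k).ncard ≤ Sx.ncard + Sy.ncard :=
            (Set.ncard_le_ncard hcover (Set.toFinite _)).trans (Set.ncard_union_le _ _)
          omega
      · -- Sx empty
        have hsub : Sset k ⊆ Sy := by
          intro u hu
          rcases hcover hu with h | h
          · exact absurd ⟨u, h⟩ hSx
          · exact h
        have hby : Sy.ncard + 2 ≤ Ey.ncard + 1 :=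
          hroot y Sy (fun u hu => hu.1) hSy (fun u hu => ⟨hu.2.1, hu.2.2.1, hu.2.2.2⟩)
        have h1 : (Sset k).ncard ≤ Sy.ncard := Set.ncard_le_ncard hsub (Set.toFinite _)
        have h2 : Ey.ncard ≤ (Dset k).ncard := Set.ncard_le_ncard hEyD (Set.toFinite _)
        omega
    · -- Sy empty
      have hsub : Sset k ⊆ Sx := by
        intro u hu
        rcases hcover hu with h | h
        · exact h
        · exact absurd ⟨u, h⟩ hSy
      have hSx : Sx.Nonempty := hkne2.mono hsub
      have hbx : Sx.ncard + 2 ≤ Ex.ncard + 1 :=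
        hroot x Sx (fun u hu => hu.1) hSx (fun u hu => ⟨hu.2.1, hu.2.2.1, hu.2.2.2⟩)
      have h1 : (Sset k).ncard ≤ Sx.ncard := Set.ncard_le_ncard hsub (Set.toFinite _)
      have h2 : Ex.ncard ≤ (Dset k).ncard := Set.ncard_le_ncard hExD (Set.toFinite _)
      omega
  -- global counting
  have hDne : ∀ u : V, ∃ e, e ∈ G.edgeSet ∧ c e = f u := by
    intro u
    have : ∀ (z : V), u ≠ z → (H (f u)).Reachable u z → ∃ e, e ∈ G.edgeSet ∧ c e = f u := by
      intro z hne hr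
      obtain ⟨p⟩ := hr
      cases p with
      | nil => exact absurd rfl hne
      | cons ha q =>
        rename_i v
        have := hHG (f u) u v ha
        exact ⟨s(u, v), G.mem_edgeSet.mpr this.1, this.2⟩
    rcases hf2 u with ⟨h1, -, h3⟩ | ⟨h1, -, h3⟩
    · exact this x h1 h3
    · exact this y h1 h3
  set Ef : Finset (Sym2 V) := (Set.toFinite G.edgeSet).toFinset with hEfdef
  have hEfmem : ∀ e, e ∈ Ef ↔ e ∈ G.edgeSet := by
    intro e; rw [hEfdef, Set.Finite.mem_toFinset]
  have hEcard : Ef.card = G.edgeSet.ncard := (Set.ncard_eq_toFinset_card _ _).symm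
  set IM : Finset ℕ := Ef.image c with hIMdef
  have himg : (c '' G.edgeSet).ncard = IM.card := by
    rw [← Set.ncard_coe_finset IM]
    congr 1
    rw [hIMdef, Finset.coe_image, Set.Finite.coe_toFinset]
  have hfiber : Ef.card = ∑ k ∈ IM, (Ef.filter (fun e => c e = k)).card :=
    Finset.card_eq_sum_card_fiberwise (fun e he => Finset.mem_image_of_mem _ he)
  have hDcard : ∀ k, (Ef.filter (fun e => c e = k)).card = (Dset k).ncard := by
    intro k
    rw [← Set.ncard_coe_finset]
    congr 1
    ext e
    simp only [Finset.coe_filter, Set.mem_setOf_eq, hEfmem]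
    rfl
  set F : Finset ℕ := Finset.univ.image f with hFdef
  have hScard : ∀ k, (Finset.univ.filter (fun u => f u = k)).card = (Sset k).ncard := by
    intro k
    rw [← Set.ncard_coe_finset]
    congr 1
    ext u
    simp only [Finset.coe_filter, Set.mem_setOf_eq, Finset.mem_univ, true_and]
    rfl
  have hVcard : Fintype.card V = ∑ k ∈ F, (Sset k).ncard := by
    rw [← Finset.card_univ]
    rw [Finset.card_eq_sum_card_fiberwise (f := f) (t := F)
      (fun u _ => Finset.mem_image_of_mem _ (Finset.mem_univ u))]
    exact Finset.sum_congr rfl (fun k _ => hScard k)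
  have hFsub : F ⊆ IM := by
    intro k hk
    rw [hFdef] at hk
    obtain ⟨u, -, rfl⟩ := Finset.mem_image.mp hk
    obtain ⟨e, he1, he2⟩ := hDne u
    exact Finset.mem_image.mpr ⟨e, (hEfmem e).mpr he1, he2⟩
  have hk0F : k0 ∈ F := by
    rw [hFdef]
    exact Finset.mem_image.mpr ⟨x, Finset.mem_univ x, hfx⟩
  have hSne : ∀ k ∈ F, (Sset k).Nonempty := by
    intro k hk
    rw [hFdef] at hk
    obtain ⟨u, -, rfl⟩ := Finset.mem_image.mp hk
    exact ⟨u, rfl⟩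
  -- sum over F
  have hsumF : ∑ k ∈ F, (Sset k).ncard + F.card ≤ ∑ k ∈ F, (Dset k).ncard + 2 := by
    have e1 : ∑ k ∈ F.erase k0, (Sset k).ncard + (Sset k0).ncard = ∑ k ∈ F, (Sset k).ncard :=
      Finset.sum_erase_add F _ hk0F
    have e2 : ∑ k ∈ F.erase k0, (Dset k).ncard + (Dset k0).ncard = ∑ k ∈ F, (Dset k).ncard :=
      Finset.sum_erase_add F _ hk0F
    have e3 : F.card = (F.erase k0).card + 1 := by
      rw [Finset.card_erase_of_mem hk0F]
      have : 1 ≤ F.card := Finset.card_pos.mpr ⟨k0, hk0F⟩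
      omega
    have e4 : ∑ k ∈ F.erase k0, ((Sset k).ncard + 1) ≤ ∑ k ∈ F.erase k0, (Dset k).ncard := by
      refine Finset.sum_le_sum ?_
      intro k hk
      exact hother k (Finset.ne_of_mem_erase hk) (hSne k (Finset.mem_of_mem_erase hk))
    rw [Finset.sum_add_distrib, Finset.sum_const, smul_eq_mul, mul_one] at e4
    omega
  -- sum over IM \ F
  have hsumRest : (IM \ F).card ≤ ∑ k ∈ IM \ F, (Dset k).ncard := by
    rw [Finset.card_eq_sum_ones]
    refine Finset.sum_le_sum ?_
    intro k hk
    have hkIM : k ∈ IM := (Finset.mem_sdiff.mp hk).1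
    rw [hIMdef] at hkIM
    obtain ⟨e, he1, rfl⟩ := Finset.mem_image.mp hkIM
    have : e ∈ Dset (c e) := ⟨(hEfmem e).mp he1, rfl⟩
    have := Set.ncard_pos (Set.toFinite _) |>.mpr ⟨e, this⟩
    omega
  have hsplit : ∑ k ∈ IM \ F, (Dset k).ncard + ∑ k ∈ F, (Dset k).ncard = ∑ k ∈ IM, (Dset k).ncard :=
    Finset.sum_sdiff hFsub
  have hcardsplit : (IM \ F).card + F.card = IM.card := Finset.card_sdiff_add_card_eq_card hFsub
  have htot : Ef.card = ∑ k ∈ IM, (Dset k).ncard := by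
    rw [hfiber]
    exact Finset.sum_congr rfl (fun k _ => hDcard k)
  rw [himg, hVcard, ← hEcard, htot]
  omega

lemma lex_path_adj {n m : ℕ} {u v : Fin n × Fin m} :
    ((pathGraph n).lexProd (pathGraph m)).Adj u v ↔
      ((u.1.val + 1 = v.1.val ∨ v.1.val + 1 = u.1.val) ∨
        (u.1 = v.1 ∧ (u.2.val + 1 = v.2.val ∨ v.2.val + 1 = u.2.val))) := by
  show ((pathGraph n).Adj u.1 v.1 ∨ (u.1 = v.1 ∧ (pathGraph m).Adj u.2 v.2)) ↔ _
  rw [pathGraph_adj, pathGraph_adj]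

def crossMap (n m : ℕ) (p : Fin (n-1) × Fin m × Fin m) : Sym2 (Fin n × Fin m) :=
  s((⟨p.1.val, by have := p.1.2; omega⟩, p.2.1), (⟨p.1.val+1, by have := p.1.2; omega⟩, p.2.2))

def vertMap (n m : ℕ) (p : Fin n × Fin (m-1)) : Sym2 (Fin n × Fin m) :=
  s((p.1, ⟨p.2.val, by have := p.2.2; omega⟩), (p.1, ⟨p.2.val+1, by have := p.2.2; omega⟩))

def spineMap (n m : ℕ) (hm : 0 < m) (k : Fin (n-1)) : Sym2 (Fin n × Fin m) :=
  s((⟨k.val, by have := k.2; omega⟩, ⟨0, hm⟩), (⟨k.val+1, by have := k.2; omega⟩, ⟨0, hm⟩))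

lemma crossMap_inj (n m : ℕ) : Function.Injective (crossMap n m) := by
  rintro ⟨⟨a, ha⟩, ⟨b, hb⟩, ⟨c, hc⟩⟩ ⟨⟨a', ha'⟩, ⟨b', hb'⟩, ⟨c', hc'⟩⟩ h
  rw [crossMap, crossMap, Sym2.eq_iff] at h
  rcases h with ⟨h1, h2⟩ | ⟨h1, h2⟩ <;>
    simp only [Prod.mk.injEq, Fin.mk.injEq] at h1 h2 <;>
    simp only [Prod.mk.injEq, Fin.mk.injEq] <;>
    omega

lemma vertMap_inj (n m : ℕ) : Function.Injective (vertMap n m) := by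
  rintro ⟨⟨a, ha⟩, ⟨b, hb⟩⟩ ⟨⟨a', ha'⟩, ⟨b', hb'⟩⟩ h
  rw [vertMap, vertMap, Sym2.eq_iff] at h
  rcases h with ⟨h1, h2⟩ | ⟨h1, h2⟩ <;>
    simp only [Prod.mk.injEq, Fin.mk.injEq] at h1 h2 <;>
    simp only [Prod.mk.injEq, Fin.mk.injEq] <;>
    omega

lemma spineMap_inj (n m : ℕ) (hm : 0 < m) : Function.Injective (spineMap n m hm) := by
  rintro ⟨a, ha⟩ ⟨a', ha'⟩ h
  rw [spineMap, spineMap, Sym2.eq_iff] at h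
  rcases h with ⟨h1, h2⟩ | ⟨h1, h2⟩ <;>
    simp only [Prod.mk.injEq, Fin.mk.injEq] at h1 h2 <;>
    simp only [Fin.mk.injEq] <;>
    omega

lemma lex_edgeSet (n m : ℕ) :
    ((pathGraph n).lexProd (pathGraph m)).edgeSet =
      ↑(Finset.univ.image (crossMap n m)) ∪ ↑(Finset.univ.image (vertMap n m)) := by
  ext e
  induction e with
  | _ u v =>
    simp only [mem_edgeSet, Set.mem_union, Finset.coe_image, Finset.coe_univ, Set.image_univ,
      Set.mem_range, lex_path_adj]
    constructor
    · rintro ((h | h) | ⟨h1, (h | h)⟩)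
      · refine Or.inl ⟨(⟨⟨u.1.val, by omega⟩, u.2, v.2⟩ : Fin (n-1) × Fin m × Fin m), ?_⟩
        rw [crossMap]
        simp only [Sym2.eq_iff, Prod.ext_iff, Fin.ext_iff]
        simp
        omega
      · refine Or.inl ⟨(⟨⟨v.1.val, by omega⟩, v.2, u.2⟩ : Fin (n-1) × Fin m × Fin m), ?_⟩
        rw [crossMap]
        simp only [Sym2.eq_iff, Prod.ext_iff, Fin.ext_iff]
        simp
        omega
      · have h1' : u.1.val = v.1.val := by rw [h1]
        refine Or.inr ⟨(⟨u.1, ⟨u.2.val, by omega⟩⟩ : Fin n × Fin (m-1)), ?_⟩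
        rw [vertMap]
        simp only [Sym2.eq_iff, Prod.ext_iff, Fin.ext_iff]
        simp
        omega
      · have h1' : u.1.val = v.1.val := by rw [h1]
        refine Or.inr ⟨(⟨u.1, ⟨v.2.val, by omega⟩⟩ : Fin n × Fin (m-1)), ?_⟩
        rw [vertMap]
        simp only [Sym2.eq_iff, Prod.ext_iff, Fin.ext_iff]
        simp
        omega
    · rintro (⟨p, hp⟩ | ⟨p, hp⟩)
      · rw [crossMap, Sym2.eq_iff] at hp
        rcases hp with ⟨h1, h2⟩ | ⟨h1, h2⟩ <;>
          simp only [Prod.ext_iff, Fin.ext_iff] at h1 h2 <;>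
          (try simp at h1 h2) <;>
          exact Or.inl (by omega)
      · rw [vertMap, Sym2.eq_iff] at hp
        rcases hp with ⟨h1, h2⟩ | ⟨h1, h2⟩ <;>
          simp only [Prod.ext_iff, Fin.ext_iff] at h1 h2 <;>
          (try simp at h1 h2) <;>
          exact Or.inr ⟨Fin.ext (by omega), by omega⟩

lemma cross_vert_disj (n m : ℕ) :
    Disjoint (Finset.univ.image (crossMap n m)) (Finset.univ.image (vertMap n m)) := by
  rw [Finset.disjoint_left]
  intro e he hv
  obtain ⟨p, -, hp⟩ := Finset.mem_image.mp he
  obtain ⟨q, -, hq⟩ := Finset.mem_image.mp hv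
  rw [← hq, crossMap, vertMap, Sym2.eq_iff] at hp
  rcases hp with ⟨h1, h2⟩ | ⟨h1, h2⟩ <;>
    simp only [Prod.ext_iff, Fin.ext_iff] at h1 h2 <;>
    (try simp at h1 h2) <;>
    omega

lemma lex_edge_ncard (n m : ℕ) :
    ((pathGraph n).lexProd (pathGraph m)).edgeSet.ncard = (n-1)*(m*m) + n*(m-1) := by
  rw [lex_edgeSet, ← Finset.coe_union, Set.ncard_coe_finset,
    Finset.card_union_of_disjoint (cross_vert_disj n m),
    Finset.card_image_of_injective _ (crossMap_inj n m),
    Finset.card_image_of_injective _ (vertMap_inj n m)]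
  simp [Fintype.card_prod, mul_assoc]

def Tf (n m : ℕ) (hm : 0 < m) : Finset (Sym2 (Fin n × Fin m)) :=
  Finset.univ.image (spineMap n m hm) ∪ Finset.univ.image (vertMap n m)

lemma spine_vert_disj (n m : ℕ) (hm : 0 < m) :
    Disjoint (Finset.univ.image (spineMap n m hm)) (Finset.univ.image (vertMap n m)) := by
  rw [Finset.disjoint_left]
  intro e he hv
  obtain ⟨p, -, hp⟩ := Finset.mem_image.mp he
  obtain ⟨q, -, hq⟩ := Finset.mem_image.mp hv
  rw [← hq, spineMap, vertMap, Sym2.eq_iff] at hp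
  rcases hp with ⟨h1, h2⟩ | ⟨h1, h2⟩ <;>
    simp only [Prod.ext_iff, Fin.ext_iff] at h1 h2 <;>
    (try simp at h1 h2) <;>
    omega

lemma Tf_card (n m : ℕ) (hm : 0 < m) : (Tf n m hm).card = (n-1) + n*(m-1) := by
  rw [Tf, Finset.card_union_of_disjoint (spine_vert_disj n m hm),
    Finset.card_image_of_injective _ (spineMap_inj n m hm),
    Finset.card_image_of_injective _ (vertMap_inj n m)]
  simp [Fintype.card_prod]

lemma Tf_subset (n m : ℕ) (hm : 0 < m) :
    ↑(Tf n m hm) ⊆ ((pathGraph n).lexProd (pathGraph m)).edgeSet := by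
  rw [lex_edgeSet, Tf]
  intro e he
  rw [Finset.coe_union, Set.mem_union] at he
  rcases he with he | he
  · left
    obtain ⟨p, -, hp⟩ := Finset.mem_image.mp (by exact_mod_cast he)
    refine Finset.mem_coe.mpr (Finset.mem_image.mpr ⟨⟨p, ⟨0, hm⟩, ⟨0, hm⟩⟩, Finset.mem_univ _, ?_⟩)
    rw [← hp, crossMap, spineMap]
  · right
    exact he

lemma walk_vert (n m : ℕ) (hm : 0 < m) (i : Fin n) (j : Fin m) :
    ∃ w : ((pathGraph n).lexProd (pathGraph m)).Walk (i, j) (i, ⟨0, hm⟩),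
      ∀ e ∈ w.edges, e ∈ Tf n m hm := by
  suffices H : ∀ (t : ℕ) (j : Fin m), j.val = t →
      ∃ w : ((pathGraph n).lexProd (pathGraph m)).Walk (i, j) (i, ⟨0, hm⟩),
        ∀ e ∈ w.edges, e ∈ Tf n m hm from H j.val j rfl
  intro t
  induction t with
  | zero =>
    intro j hj
    have : j = ⟨0, hm⟩ := Fin.ext hj
    subst this
    exact ⟨SimpleGraph.Walk.nil, by simp⟩
  | succ t ih =>
    intro j hj
    have htm : t < m := by have := j.2; omega
    obtain ⟨w', hw'⟩ := ih ⟨t, htm⟩ rfl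
    have hadj : ((pathGraph n).lexProd (pathGraph m)).Adj (i, j) (i, ⟨t, htm⟩) := by
      rw [lex_path_adj]
      exact Or.inr ⟨rfl, Or.inr (by simp [hj])⟩
    refine ⟨SimpleGraph.Walk.cons hadj w', ?_⟩
    intro e he
    rw [SimpleGraph.Walk.edges_cons, List.mem_cons] at he
    rcases he with rfl | he
    · rw [Tf, Finset.mem_union]
      right
      refine Finset.mem_image.mpr ⟨⟨i, ⟨t, by have := j.2; omega⟩⟩, Finset.mem_univ _, ?_⟩
      rw [vertMap, Sym2.eq_iff]
      right
      exact ⟨rfl, Prod.ext rfl (Fin.ext hj.symm)⟩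
    · exact hw' e he

lemma walk_spine (n m : ℕ) (hn : 0 < n) (hm : 0 < m) (i : Fin n) :
    ∃ w : ((pathGraph n).lexProd (pathGraph m)).Walk (i, ⟨0, hm⟩) (⟨0, hn⟩, ⟨0, hm⟩),
      ∀ e ∈ w.edges, e ∈ Tf n m hm := by
  suffices H : ∀ (t : ℕ) (i : Fin n), i.val = t →
      ∃ w : ((pathGraph n).lexProd (pathGraph m)).Walk (i, ⟨0, hm⟩) (⟨0, hn⟩, ⟨0, hm⟩),
        ∀ e ∈ w.edges, e ∈ Tf n m hm from H i.val i rfl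
  intro t
  induction t with
  | zero =>
    intro i hi
    have : i = ⟨0, hn⟩ := Fin.ext hi
    subst this
    exact ⟨SimpleGraph.Walk.nil, by simp⟩
  | succ t ih =>
    intro i hi
    have htn : t < n := by have := i.2; omega
    obtain ⟨w', hw'⟩ := ih ⟨t, htn⟩ rfl
    have hadj : ((pathGraph n).lexProd (pathGraph m)).Adj (i, ⟨0, hm⟩) (⟨t, htn⟩, ⟨0, hm⟩) := by
      rw [lex_path_adj]
      exact Or.inl (Or.inr (by simp [hi]))
    refine ⟨SimpleGraph.Walk.cons hadj w', ?_⟩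
    intro e he
    rw [SimpleGraph.Walk.edges_cons, List.mem_cons] at he
    rcases he with rfl | he
    · rw [Tf, Finset.mem_union]
      left
      refine Finset.mem_image.mpr ⟨⟨t, by have := i.2; omega⟩, Finset.mem_univ _, ?_⟩
      rw [spineMap, Sym2.eq_iff]
      right
      exact ⟨rfl, Prod.ext (Fin.ext hi.symm) rfl⟩
    · exact hw' e he

lemma arith_h5 (n m : ℕ) (hn : 4 ≤ n) (hm : 3 ≤ m) : n ≤ m^2*n - m^2 := by
  have e : m^2*(n-1) + m^2 = m^2*n := by
    obtain ⟨a, rfl⟩ : ∃ a, n = a + 4 := ⟨n - 4, by omega⟩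
    rw [show a+4-1 = a+3 from by omega]
    ring
  have h9 : 9 ≤ m^2 := by nlinarith
  have h10 : 9*(n-1) ≤ m^2*(n-1) := Nat.mul_le_mul_right _ h9
  omega

lemma arith2 (n m : ℕ) (hn : 4 ≤ n) (hm : 3 ≤ m) :
    (m^2*n - m^2 - n + 2) + n*m = ((n-1)*(m*m) + n*(m-1)) + 2 := by
  have h1 : 1 ≤ n := by omega
  have h2 : 1 ≤ m := by omega
  have h4 : m^2 ≤ m^2*n := Nat.le_mul_of_pos_right _ (by omega)
  zify [h1, h2, h4, arith_h5 n m hn hm]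
  ring

lemma arith1 (n m : ℕ) (hn : 4 ≤ n) (hm : 3 ≤ m) :
    1 + (((n-1)*(m*m) + n*(m-1)) - ((n-1) + n*(m-1))) = m^2*n - m^2 - n + 2 := by
  have h1 : 1 ≤ n := by omega
  have h2 : 1 ≤ m := by omega
  have h4 : m^2 ≤ m^2*n := Nat.le_mul_of_pos_right _ (by omega)
  have h3 : (n-1) + n*(m-1) ≤ (n-1)*(m*m) + n*(m-1) := by
    have : (n-1)*1 ≤ (n-1)*(m*m) := Nat.mul_le_mul_left _ (by nlinarith)
    omega
  zify [h1, h2, h3, h4, arith_h5 n m hn hm]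
  ring

lemma lower_bound (n m : ℕ) (hn : 4 ≤ n) (hm : 3 ≤ m) :
    ∃ c : Sym2 (Fin n × Fin m) → ℕ,
      (∀ u v : Fin n × Fin m,
        ∃ w : ((pathGraph n).lexProd (pathGraph m)).Walk u v, ∃ k, ∀ e ∈ w.edges, c e = k) ∧
      (c '' ((pathGraph n).lexProd (pathGraph m)).edgeSet).ncard = m^2*n - m^2 - n + 2 := by
  classical
  have hm' : 0 < m := by omega
  have hn' : 0 < n := by omega
  set G := (pathGraph n).lexProd (pathGraph m) with hG
  set T := Tf n m hm' with hT
  set enc : Sym2 (Fin n × Fin m) → ℕ := fun e => (Fintype.equivFin (Sym2 (Fin n × Fin m)) e).val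
    with henc
  have hencinj : Function.Injective enc := fun a b h =>
    (Fintype.equivFin _).injective (Fin.val_injective h)
  refine ⟨fun e => if e ∈ T then 0 else enc e + 1, ?_, ?_⟩
  · rintro ⟨i, j⟩ ⟨i', j'⟩
    obtain ⟨w1, hw1⟩ := walk_vert n m hm' i j
    obtain ⟨w2, hw2⟩ := walk_spine n m hn' hm' i
    obtain ⟨w2', hw2'⟩ := walk_spine n m hn' hm' i'
    obtain ⟨w1', hw1'⟩ := walk_vert n m hm' i' j'
    refine ⟨w1.append (w2.append (w2'.reverse.append w1'.reverse)), 0, ?_⟩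
    intro e he
    have heT : e ∈ T := by
      simp only [SimpleGraph.Walk.edges_append, SimpleGraph.Walk.edges_reverse,
        List.mem_append, List.mem_reverse] at he
      rcases he with he | he | he | he
      · exact hw1 e he
      · exact hw2 e he
      · exact hw2' e he
      · exact hw1' e he
    simp [heT]
  · have himage : (fun e => if e ∈ T then 0 else enc e + 1) '' G.edgeSet
        = {0} ∪ ((fun e => enc e + 1) '' (G.edgeSet \ ↑T)) := by
      ext a
      constructor
      · rintro ⟨e, he, rfl⟩
        by_cases heT : e ∈ T
        · simp [heT]
        · exact Or.inr ⟨e, ⟨he, heT⟩, by simp [heT]⟩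
      · rintro (ha | ⟨e, ⟨he, heT⟩, rfl⟩)
        · -- a = 0, use a spine edge
          have h0 : (⟨0, by omega⟩ : Fin (n-1)) ∈ (Finset.univ : Finset (Fin (n-1))) :=
            Finset.mem_univ _
          set e0 := spineMap n m hm' ⟨0, by omega⟩ with he0
          have he0T : e0 ∈ T := by
            rw [hT, Tf, Finset.mem_union]
            exact Or.inl (Finset.mem_image.mpr ⟨_, h0, rfl⟩)
          have he0E : e0 ∈ G.edgeSet := Tf_subset n m hm' he0T
          refine ⟨e0, he0E, ?_⟩
          simp only [Set.mem_singleton_iff] at ha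
          simp [he0T, ha]
        · refine ⟨e, he, ?_⟩
          rw [Finset.mem_coe] at heT
          simp [heT]
    rw [himage]
    have hdisj : Disjoint ({0} : Set ℕ) ((fun e => enc e + 1) '' (G.edgeSet \ ↑T)) := by
      rw [Set.disjoint_left]
      rintro a ha ⟨e, -, rfl⟩
      simp at ha
    rw [Set.ncard_union_eq hdisj (Set.finite_singleton 0) (Set.Finite.image _ (Set.toFinite _)),
      Set.ncard_singleton,
      Set.ncard_image_of_injective _ (fun a b h => hencinj (by omega)),
      Set.ncard_diff (Tf_subset n m hm'), Set.ncard_coe_finset,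
      lex_edge_ncard, Tf_card]
    exact arith1 n m hn hm

/-- Proposition 3.1(ii): for `n ≥ 4`, `m ≥ 3`, `mc(P_n ∘ P_m) = m²n - m² - n + 2`. -/
theorem mc_lex_paths (n m : ℕ) (hn : 4 ≤ n) (hm : 3 ≤ m) :
    ((pathGraph n).lexProd (pathGraph m)).mc = m ^ 2 * n - m ^ 2 - n + 2 := by
  classical
  obtain ⟨c₀, hc₀, hcount⟩ := lower_bound n m hn hm
  rw [SimpleGraph.mc]
  have hmem : m ^ 2 * n - m ^ 2 - n + 2 ∈
      {k | ∃ c : Sym2 (Fin n × Fin m) → ℕ,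
        ((pathGraph n).lexProd (pathGraph m)).IsMCColoring c ∧
        (c '' ((pathGraph n).lexProd (pathGraph m)).edgeSet).ncard = k} :=
    ⟨c₀, hc₀, hcount⟩
  have hbdd : BddAbove {k | ∃ c : Sym2 (Fin n × Fin m) → ℕ,
      ((pathGraph n).lexProd (pathGraph m)).IsMCColoring c ∧
      (c '' ((pathGraph n).lexProd (pathGraph m)).edgeSet).ncard = k} := by
    refine ⟨((pathGraph n).lexProd (pathGraph m)).edgeSet.ncard, ?_⟩
    rintro k ⟨c, -, rfl⟩
    exact Set.ncard_image_le (Set.toFinite _)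
  have hle : ∀ k ∈ {k | ∃ c : Sym2 (Fin n × Fin m) → ℕ,
      ((pathGraph n).lexProd (pathGraph m)).IsMCColoring c ∧
      (c '' ((pathGraph n).lexProd (pathGraph m)).edgeSet).ncard = k},
      k ≤ m ^ 2 * n - m ^ 2 - n + 2 := by
    rintro k ⟨c, hc, rfl⟩
    set x : Fin n × Fin m := (⟨0, by omega⟩, ⟨0, by omega⟩) with hx
    set y : Fin n × Fin m := (⟨3, by omega⟩, ⟨0, by omega⟩) with hy
    have hxy : x ≠ y := by
      rw [hx, hy]
      intro h
      have := congrArg (fun p => (p.1 : Fin n).val) h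
      simp at this
    have hnadj : ¬ ((pathGraph n).lexProd (pathGraph m)).Adj x y := by
      rw [lex_path_adj]
      rintro ((h | h) | ⟨h, -⟩)
      · simp [hx, hy] at h
      · simp [hx, hy] at h
      · rw [hx, hy, Fin.ext_iff] at h
        simp at h
    have hno : ∀ u, ¬ (((pathGraph n).lexProd (pathGraph m)).Adj u x ∧
        ((pathGraph n).lexProd (pathGraph m)).Adj u y) := by
      rintro u ⟨h1, h2⟩
      rw [lex_path_adj] at h1 h2
      have e1 : u.1.val ≤ 1 := by
        rcases h1 with (h | h) | ⟨h, -⟩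
        · rw [hx] at h; simp at h
        · rw [hx] at h; simp at h; omega
        · rw [hx, Fin.ext_iff] at h; simp at h; omega
      have e2 : 2 ≤ u.1.val := by
        rcases h2 with (h | h) | ⟨h, -⟩
        · rw [hy] at h; simp at h; omega
        · rw [hy] at h; simp at h; omega
        · rw [hy, Fin.ext_iff] at h; simp at h; omega
      omega
    have hub := mc_upper_aux ((pathGraph n).lexProd (pathGraph m)) x y hxy hnadj hno c
      (by exact hc)
    rw [Fintype.card_prod, Fintype.card_fin, Fintype.card_fin, lex_edge_ncard] at hub
    have hfin : (c '' ((pathGraph n).lexProd (pathGraph m)).edgeSet).ncard + n*m ≤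
        (m ^ 2 * n - m ^ 2 - n + 2) + n*m := by
      rw [arith2 n m hn hm]
      exact hub
    exact Nat.le_of_add_le_add_right hfin
  exact le_antisymm (csSup_le ⟨_, hmem⟩ hle) (le_csSup hbdd hmem)
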